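/- arXiv:1201.2311 — 3 statements merged into one kernel-verified Lean document; each statement's English description precedes it below -/
import Mathlib

section
/- Let b ≥ 2 be an integer, d ≥ 1, and let f(x) = x_1⋯x_d for x ∈ [0,1)^d. Let j ∈ ℕ_{−1}^d, m ∈ D_j, l ∈ B_j, let s = #{i ∈ {1,…,d} : j_i ≠ −1}, and let η_1 < … < η_s enumerate the indices i with j_i ≠ −1. Then the b-adic Haar coefficient of f satisfies μ_{jml}(f) = b^{−2j_{η_1} − … − 2j_{η_s} − s} / ( 2^{d−s} · (e^{2πi l_{η_1}/b} − 1)⋯(e^{2πi l_{η_s}/b} − 1) ). -/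
open MeasureTheory

/-- `e^{2πi x / b}`. -/
noncomputable def eb (b : ℕ) (x : ℝ) : ℂ :=
  Complex.exp (2 * (Real.pi : ℂ) * Complex.I * (x : ℂ) / (b : ℂ))

/-- The one-dimensional `b`-adic Haar function `h_{jml}` for `j ∈ ℕ₀`:
it vanishes outside `I_{jm} = [b^{-j}m, b^{-j}(m+1))` and equals `e^{2πilk/b}` on
`I_{jm}^k = [b^{-j-1}(bm+k), b^{-j-1}(bm+k+1))`, `k = 0,…,b-1`. -/
noncomputable def haarFn (b j m l : ℕ) (x : ℝ) : ℂ :=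
  if (m : ℝ) / (b : ℝ) ^ j ≤ x ∧ x < ((m : ℝ) + 1) / (b : ℝ) ^ j then
    eb b (l * ((⌊(b : ℝ) ^ (j + 1) * x⌋).toNat - b * m))
  else 0

/-- The one-dimensional `b`-adic Haar function with index `j ∈ ℕ_{-1} = {-1,0,1,…}`;
for `j = -1` it is the indicator of `[0,1)`. -/
noncomputable def haarFnZ (b : ℕ) (j : ℤ) (m l : ℕ) (x : ℝ) : ℂ :=
  if j = -1 then (if 0 ≤ x ∧ x < 1 then 1 else 0)
  else haarFn b j.toNat m l x

/-- The `b`-adic Haar coefficient `μ_{jml}(f) = ∫_{[0,1)^d} f(x) h_{jml}(x) dx`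
of a function `f : [0,1)^d → ℂ`, where `h_{jml}(x) = ∏ i, h_{j_i m_i l_i}(x_i)`. -/
noncomputable def haarCoeff (b d : ℕ) (j : Fin d → ℤ) (m l : Fin d → ℕ)
    (f : (Fin d → ℝ) → ℂ) : ℂ :=
  ∫ x in Set.univ.pi (fun _ : Fin d => Set.Ico (0 : ℝ) 1),
    f x * ∏ i, haarFnZ b (j i) (m i) (l i) (x i)

/- ### Auxiliary lemmas -/

lemma eb_nat_mul (b l k : ℕ) : eb b ((l * k : ℕ) : ℝ) = (eb b l) ^ k := by
  simp only [eb, ← Complex.exp_nat_mul]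
  congr 1
  push_cast
  ring

lemma eb_pow_b (b l : ℕ) (hb : 2 ≤ b) : (eb b l) ^ b = 1 := by
  simp only [eb, ← Complex.exp_nat_mul, Complex.ofReal_natCast]
  have hb0 : (b : ℂ) ≠ 0 := Nat.cast_ne_zero.2 (by omega)
  have : (b : ℂ) * (2 * (Real.pi : ℂ) * Complex.I * (l : ℂ) / (b : ℂ))
      = l * (2 * Real.pi * Complex.I) := by field_simp
  rw [this, Complex.exp_nat_mul, Complex.exp_two_pi_mul_I, one_pow]

lemma eb_ne_one (b l : ℕ) (hb : 2 ≤ b) (hl1 : 1 ≤ l) (hlb : l < b) : eb b l ≠ 1 := by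
  intro h
  simp only [eb, Complex.ofReal_natCast, Complex.exp_eq_one_iff] at h
  obtain ⟨n, hn⟩ := h
  have hb0 : (b : ℂ) ≠ 0 := Nat.cast_ne_zero.2 (by omega)
  have hpi : (2 : ℂ) * Real.pi * Complex.I ≠ 0 := by
    simp [Real.pi_ne_zero, Complex.I_ne_zero]
  have hl : (l : ℂ) = n * b := by
    field_simp at hn
    exact mul_left_cancel₀ hpi (by linear_combination (2 * (Real.pi:ℂ) * Complex.I) * hn)
  have hzl : (l : ℤ) = n * b := by exact_mod_cast hl
  rcases le_or_gt n 0 with h0 | h0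
  · nlinarith [hzl, (by exact_mod_cast hl1 : (1:ℤ) ≤ l), (by exact_mod_cast hb : (2:ℤ) ≤ b)]
  · nlinarith [hzl, (by exact_mod_cast hlb : (l:ℤ) < b), (by exact_mod_cast hb : (2:ℤ) ≤ b)]

lemma sum_mul_pow_aux (z : ℂ) : ∀ n : ℕ, (z - 1) * ∑ k ∈ Finset.range n, (k : ℂ) * z ^ k
    = ((n : ℂ) - 1) * z ^ n - ∑ k ∈ Finset.range n, z ^ k + 1 := by
  intro n
  induction n with
  | zero => simp
  | succ n ih =>
    rw [Finset.sum_range_succ, Finset.sum_range_succ]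
    push_cast
    linear_combination ih + (z - 1) * z ^ n * (n : ℂ)

lemma geom_eb (b l : ℕ) (hb : 2 ≤ b) (hl1 : 1 ≤ l) (hlb : l < b) :
    ∑ k ∈ Finset.range b, (eb b l) ^ k = 0 := by
  have h := geom_sum_eq (eb_ne_one b l hb hl1 hlb) b
  rw [h, eb_pow_b b l hb, sub_self, zero_div]

lemma key_eb (b l : ℕ) (hb : 2 ≤ b) (hl1 : 1 ≤ l) (hlb : l < b) :
    (eb b l - 1) * ∑ k ∈ Finset.range b, (k : ℂ) * (eb b l) ^ k = b := by
  rw [sum_mul_pow_aux, eb_pow_b b l hb, geom_eb b l hb hl1 hlb]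
  ring

lemma haarFn_eq_sum (b j m l : ℕ) (hb : 2 ≤ b) (x : ℝ) :
    haarFn b j m l x = ∑ k ∈ Finset.range b,
      Set.indicator (Set.Ico (((b:ℝ) * m + k) / (b:ℝ) ^ (j+1)) (((b:ℝ) * m + k + 1) / (b:ℝ) ^ (j+1)))
        (fun _ => (eb b l) ^ k) x := by
  have hbR : (0:ℝ) < b := by positivity
  have hP : (0:ℝ) < (b:ℝ) ^ (j+1) := by positivity
  have hPj : (0:ℝ) < (b:ℝ) ^ j := by positivity
  have hpow : (b:ℝ) ^ (j+1) = (b:ℝ) ^ j * b := pow_succ _ _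
  have hmem : ∀ k : ℕ, x ∈ Set.Ico (((b:ℝ) * m + k) / (b:ℝ) ^ (j+1)) (((b:ℝ) * m + k + 1) / (b:ℝ) ^ (j+1))
      ↔ ((b:ℝ) * m + k ≤ (b:ℝ) ^ (j+1) * x ∧ (b:ℝ) ^ (j+1) * x < (b:ℝ) * m + k + 1) := by
    intro k
    rw [Set.mem_Ico, div_le_iff₀ hP, lt_div_iff₀ hP]
    constructor <;> rintro ⟨h1, h2⟩ <;> constructor <;> linarith [h1, h2]
  by_cases hx : (m : ℝ) / (b : ℝ) ^ j ≤ x ∧ x < ((m : ℝ) + 1) / (b : ℝ) ^ j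
  · obtain ⟨hx1, hx2⟩ := hx
    rw [div_le_iff₀ hPj] at hx1
    rw [lt_div_iff₀ hPj] at hx2
    have h1 : (b:ℝ) * m ≤ (b:ℝ) ^ (j+1) * x := by rw [hpow]; nlinarith
    have h2 : (b:ℝ) ^ (j+1) * x < (b:ℝ) * m + b := by rw [hpow]; nlinarith
    set n := ⌊(b : ℝ) ^ (j + 1) * x⌋ with hn
    have hn1 : (b * m : ℤ) ≤ n := by
      rw [hn]; exact Int.le_floor.2 (by push_cast; linarith)
    have hn2 : n < (b * m : ℤ) + b := by
      rw [hn]; exact Int.floor_lt.2 (by push_cast; linarith)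
    set k₀ : ℕ := n.toNat - b * m with hk₀
    have hnk : n = (b * m : ℤ) + k₀ := by omega
    have hk₀b : k₀ < b := by omega
    have htn : (l:ℝ) * ((n.toNat : ℝ) - (b:ℝ) * (m:ℝ)) = ((l * k₀ : ℕ) : ℝ) := by
      have hnn : n.toNat = b * m + k₀ := by omega
      rw [hnn]; push_cast; ring
    rw [haarFn, if_pos ⟨by rw [div_le_iff₀ hPj]; linarith, by rw [lt_div_iff₀ hPj]; linarith⟩]
    rw [← hn, htn, eb_nat_mul]
    rw [Finset.sum_eq_single_of_mem k₀ (Finset.mem_range.2 hk₀b)]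
    · rw [Set.indicator_of_mem]
      rw [hmem k₀]
      constructor
      · have := Int.floor_le ((b : ℝ) ^ (j + 1) * x)
        rw [← hn, hnk] at this; push_cast at this; linarith
      · have := Int.lt_floor_add_one ((b : ℝ) ^ (j + 1) * x)
        rw [← hn, hnk] at this; push_cast at this; linarith
    · intro k hk hkk
      apply Set.indicator_of_notMem
      rw [hmem k]
      rintro ⟨h3, h4⟩
      have : n = (b * m : ℤ) + k := by
        rw [hn]
        apply Int.floor_eq_iff.2
        constructor <;> push_cast <;> [linarith; linarith]
      omega
  · rw [haarFn, if_neg hx]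
    symm
    apply Finset.sum_eq_zero
    intro k hk
    apply Set.indicator_of_notMem
    rw [hmem k]
    rintro ⟨h3, h4⟩
    apply hx
    have hkb : (k : ℝ) + 1 ≤ b := by exact_mod_cast Finset.mem_range.1 hk
    constructor
    · rw [div_le_iff₀ hPj]; rw [hpow] at h3; nlinarith
    · rw [lt_div_iff₀ hPj]; rw [hpow] at h4; nlinarith

lemma integral_Ico_id (a c : ℝ) (h : a ≤ c) :
    ∫ x in Set.Ico a c, (x : ℂ) = (((c ^ 2 - a ^ 2) / 2 : ℝ) : ℂ) := by
  have : ∫ x in Set.Ico a c, (x : ℂ) = ((∫ x in Set.Ico a c, x : ℝ) : ℂ) :=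
    integral_ofReal (f := fun x : ℝ => x)
  rw [this]
  norm_cast
  rw [setIntegral_congr_set Ico_ae_eq_Ioc, ← intervalIntegral.integral_of_le h]
  exact integral_id

set_option maxHeartbeats 1000000 in
lemma integral_haarFn (b j m l : ℕ) (hb : 2 ≤ b) (hm : m < b ^ j) (hl1 : 1 ≤ l) (hlb : l < b) :
    ∫ x in Set.Ico (0:ℝ) 1, (x : ℂ) * haarFn b j m l x
      = ((b : ℂ) ^ (2 * j + 1))⁻¹ / (eb b l - 1) := by
  have hbR : (0:ℝ) < b := by positivity
  have hP : (0:ℝ) < (b:ℝ) ^ (j+1) := by positivity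
  set A : ℕ → ℝ := fun k => ((b:ℝ) * m + k) / (b:ℝ) ^ (j+1) with hA
  set w : ℂ := eb b l with hw
  have hA0 : ∀ k : ℕ, 0 ≤ A k := by
    intro k; apply div_nonneg _ hP.le; positivity
  have hA1 : ∀ k : ℕ, k ≤ b → A k ≤ 1 := by
    intro k hk
    rw [hA, div_le_one hP]
    have : (m : ℝ) + 1 ≤ (b:ℝ) ^ j := by exact_mod_cast Nat.succ_le_of_lt hm
    have hp : (b:ℝ) ^ (j+1) = (b:ℝ) ^ j * b := pow_succ _ _
    have hkb : (k:ℝ) ≤ b := by exact_mod_cast hk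
    nlinarith
  have hmono : ∀ k : ℕ, A k ≤ A (k+1) := by
    intro k
    rw [hA, div_le_div_iff_of_pos_right hP]
    push_cast; linarith
  have hb0 : (b : ℂ) ≠ 0 := Nat.cast_ne_zero.2 (by omega)
  have hw1 : w - 1 ≠ 0 := sub_ne_zero.2 (eb_ne_one b l hb hl1 hlb)
  have hrw : ∀ x : ℝ, (x:ℂ) * haarFn b j m l x
      = ∑ k ∈ Finset.range b,
          Set.indicator (Set.Ico (A k) (A (k+1))) (fun y : ℝ => (y:ℂ) * w ^ k) x := by
    intro x
    rw [haarFn_eq_sum b j m l hb, Finset.mul_sum]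
    refine Finset.sum_congr rfl fun k _ => ?_
    have hAk : A k = ((b:ℝ) * m + k) / (b:ℝ) ^ (j+1) := rfl
    have hAk1 : A (k+1) = ((b:ℝ) * m + k + 1) / (b:ℝ) ^ (j+1) := by
      rw [hA]; push_cast; ring_nf
    rw [hAk1, hAk]
    by_cases hxk : x ∈ Set.Ico (((b:ℝ) * m + k) / (b:ℝ) ^ (j+1)) (((b:ℝ) * m + k + 1) / (b:ℝ) ^ (j+1))
    · rw [Set.indicator_of_mem hxk, Set.indicator_of_mem hxk]
    · rw [Set.indicator_of_notMem hxk, Set.indicator_of_notMem hxk, mul_zero]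
  simp_rw [hrw]
  have hint : ∀ k ∈ Finset.range b,
      Integrable (Set.indicator (Set.Ico (A k) (A (k+1))) (fun y : ℝ => (y:ℂ) * w ^ k))
        (volume.restrict (Set.Ico (0:ℝ) 1)) := by
    intro k _
    rw [integrable_indicator_iff measurableSet_Ico]
    have hc : Continuous fun y : ℝ => (y:ℂ) * w ^ k := by continuity
    have hI : IntegrableOn (fun y : ℝ => (y:ℂ) * w ^ k) (Set.Icc (A k) (A (k+1))) volume :=
      hc.integrableOn_Icc
    unfold IntegrableOn
    rw [Measure.restrict_restrict measurableSet_Ico]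
    exact hI.mono_set (Set.inter_subset_left.trans Set.Ico_subset_Icc_self)
  rw [integral_finset_sum _ hint]
  have hterm : ∀ k ∈ Finset.range b,
      ∫ x in Set.Ico (0:ℝ) 1,
          Set.indicator (Set.Ico (A k) (A (k+1))) (fun y : ℝ => (y:ℂ) * w ^ k) x
        = w ^ k * ((((A (k+1))^2 - (A k)^2)/2 : ℝ) : ℂ) := by
    intro k hk
    rw [setIntegral_indicator measurableSet_Ico]
    have hsub : Set.Ico (0:ℝ) 1 ∩ Set.Ico (A k) (A (k+1)) = Set.Ico (A k) (A (k+1)) :=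
      Set.inter_eq_right.2 (Set.Ico_subset_Ico (hA0 k) (hA1 (k+1) (Finset.mem_range.1 hk)))
    rw [hsub, MeasureTheory.integral_mul_const, integral_Ico_id _ _ (hmono k), mul_comm]
  rw [Finset.sum_congr rfl hterm]
  have hBne : ((b:ℂ) ^ (j+1)) ≠ 0 := pow_ne_zero _ hb0
  have hterm2 : ∀ k ∈ Finset.range b,
      w ^ k * ((((A (k+1))^2 - (A k)^2)/2 : ℝ) : ℂ)
        = ((k:ℂ) * w ^ k) * (2 / (2 * (b:ℂ) ^ (2*j+2)))
          + w ^ k * ((2 * (b:ℂ) * m + 1) / (2 * (b:ℂ) ^ (2*j+2))) := by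
    intro k _
    rw [hA]
    push_cast
    field_simp
    ring
  rw [Finset.sum_congr rfl hterm2, Finset.sum_add_distrib, ← Finset.sum_mul, ← Finset.sum_mul,
    geom_eb b l hb hl1 hlb, zero_mul, add_zero]
  have hS1 : ∑ k ∈ Finset.range b, (k:ℂ) * w ^ k = (b:ℂ) / (w - 1) := by
    rw [eq_div_iff hw1, mul_comm]
    exact key_eb b l hb hl1 hlb
  rw [hS1]
  field_simp
  ring

lemma integral_coord_neg :
    ∫ x in Set.Ico (0:ℝ) 1, (x : ℂ) * (if 0 ≤ x ∧ x < 1 then (1:ℂ) else 0) = 2⁻¹ := by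
  rw [setIntegral_congr_fun measurableSet_Ico
    (fun x hx => by rw [if_pos ⟨hx.1, hx.2⟩, mul_one] : ∀ x ∈ Set.Ico (0:ℝ) 1,
      (x : ℂ) * (if 0 ≤ x ∧ x < 1 then (1:ℂ) else 0) = (x : ℂ))]
  rw [integral_Ico_id 0 1 zero_le_one]
  norm_num

lemma restrict_pi_eq (d : ℕ) :
    (volume : Measure (Fin d → ℝ)).restrict (Set.univ.pi fun _ : Fin d => Set.Ico (0:ℝ) 1)
      = Measure.pi fun _ : Fin d => (volume : Measure ℝ).restrict (Set.Ico (0:ℝ) 1) := by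
  refine (Measure.pi_eq fun t ht => ?_).symm
  rw [Measure.restrict_apply (MeasurableSet.univ_pi ht), ← Set.pi_inter_distrib]
  rw [volume_pi_pi]
  exact Finset.prod_congr rfl fun i _ => (Measure.restrict_apply (ht i)).symm

lemma integral_pi_prod (d : ℕ) (g : Fin d → ℝ → ℂ) :
    ∫ x in Set.univ.pi (fun _ : Fin d => Set.Ico (0:ℝ) 1), ∏ i, g i (x i)
      = ∏ i, ∫ t in Set.Ico (0:ℝ) 1, g i t := by
  rw [restrict_pi_eq]
  have hsf : SigmaFinite ((volume : Measure ℝ).restrict (Set.Ico (0:ℝ) 1)) := inferInstance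
  letI : MeasureSpace ℝ := ⟨(volume : Measure ℝ).restrict (Set.Ico (0:ℝ) 1)⟩
  letI : SigmaFinite (volume : Measure ℝ) := hsf
  exact MeasureTheory.integral_fintype_prod_eq_prod g

/-- the `b`-adic Haar coefficients of `f(x) = x_1 ⋯ x_d`. -/
theorem statement0 (b d : ℕ) (hb : 2 ≤ b) (hd : 1 ≤ d)
    (j : Fin d → ℤ) (hj : ∀ i, -1 ≤ j i)
    (m l : Fin d → ℕ)
    (hm : ∀ i, (j i = -1 → m i = 0) ∧ (j i ≠ -1 → m i < b ^ (j i).toNat))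
    (hl : ∀ i, (j i = -1 → l i = 1) ∧ (j i ≠ -1 → 1 ≤ l i ∧ l i < b)) :
    haarCoeff b d j m l (fun x => ∏ i, (x i : ℂ)) =
      ((b : ℂ) ^ (2 * (∑ i ∈ Finset.univ.filter (fun i => j i ≠ -1), (j i).toNat)
            + (Finset.univ.filter (fun i => j i ≠ -1)).card))⁻¹ /
        (2 ^ (d - (Finset.univ.filter (fun i => j i ≠ -1)).card) *
          ∏ i ∈ Finset.univ.filter (fun i => j i ≠ -1), (eb b (l i) - 1)) := by
  classical
  unfold haarCoeff
  simp_rw [← Finset.prod_mul_distrib]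
  rw [integral_pi_prod d (fun i t => (t:ℂ) * haarFnZ b (j i) (m i) (l i) t)]
  have hval : ∀ i, (∫ t in Set.Ico (0:ℝ) 1, (t:ℂ) * haarFnZ b (j i) (m i) (l i) t)
      = if j i ≠ -1 then ((b:ℂ)^(2*(j i).toNat+1))⁻¹ * (eb b (l i) - 1)⁻¹ else (2:ℂ)⁻¹ := by
    intro i
    by_cases hji : j i = -1
    · simp only [hji, haarFnZ, if_pos rfl, ne_eq, not_true_eq_false, if_false]
      exact integral_coord_neg
    · simp only [haarFnZ, if_neg hji, ne_eq, if_pos hji]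
      rw [integral_haarFn b _ _ _ hb ((hm i).2 hji) ((hl i).2 hji).1 ((hl i).2 hji).2,
        div_eq_mul_inv]
  rw [Finset.prod_congr rfl (fun i _ => hval i), Finset.prod_ite]
  have hcard : (Finset.univ.filter (fun i => ¬ j i ≠ -1)).card
      = d - (Finset.univ.filter (fun i => j i ≠ -1)).card := by
    have := Finset.card_filter_add_card_filter_not
      (s := (Finset.univ : Finset (Fin d))) (p := fun i => j i ≠ -1)
    simp only [Finset.card_univ, Fintype.card_fin] at this
    omega
  rw [Finset.prod_const, hcard]
  rw [Finset.prod_mul_distrib, Finset.prod_inv_distrib, Finset.prod_inv_distrib,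
    Finset.prod_pow_eq_pow_sum]
  have hsum : ∑ i ∈ Finset.univ.filter (fun i => j i ≠ -1), (2 * (j i).toNat + 1)
      = 2 * (∑ i ∈ Finset.univ.filter (fun i => j i ≠ -1), (j i).toNat)
        + (Finset.univ.filter (fun i => j i ≠ -1)).card := by
    rw [Finset.sum_add_distrib, Finset.sum_const, ← Finset.mul_sum]
    simp [mul_comm]
  rw [hsum, div_eq_mul_inv, mul_inv, inv_pow]
  ring
end

section
/- Let b be a prime and d, n positive integers, let 𝒞 and 𝒞^⊥ be mutually dual 𝔽_b-linear subspaces of 𝔽_b^{dn}, and let γ = (γ_1,…,γ_d), λ = (λ_1,…,λ_d) be integer vectors with 0 ≤ λ_i ≤ γ_i ≤ n for all i. Then: #(𝒞 ∩ 𝒱_{γ,λ}) = (#𝒞 / b^{|λ| + σ}) · #(𝒞^⊥ ∩ 𝒱_{γ,λ}^⊥). -/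
open Module Finset

/-- The dual `𝒞^⊥ = {A : B·A = 0 for all B ∈ 𝒞}` of a set `𝒞 ⊆ 𝔽_b^{dn}` with respect
to the standard inner product. -/
def dualCode {b d n : ℕ} (C : Set (Fin d → Fin n → ZMod b)) :
    Set (Fin d → Fin n → ZMod b) :=
  {A | ∀ B ∈ C, ∑ i, ∑ k, B i k * A i k = 0}

/-- The set `𝒱_{γ,λ} ⊆ 𝔽_b^{dn}`: all `A = (a_1,…,a_d)` such that (with 1-based
coordinate indices) `a_{ik} = 0` for all `k ≤ λ_i`, and `a_{iγ_i} = 0` when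
`λ_i < γ_i`. -/
def Vgl (b d n : ℕ) (γ lam : Fin d → ℕ) : Set (Fin d → Fin n → ZMod b) :=
  {A | ∀ (i : Fin d) (k : Fin n),
    ((k : ℕ) + 1 ≤ lam i → A i k = 0) ∧
    (lam i < γ i → (k : ℕ) + 1 = γ i → A i k = 0)}

/-- The set `𝒱_{γ,λ}^⊥ ⊆ 𝔽_b^{dn}`: all `A` such that (with 1-based coordinate indices)
`a_{ik} = 0` for all `k` with `λ_i < k < γ_i` and all `k` with `γ_i < k ≤ n`. -/
def VglPerp (b d n : ℕ) (γ lam : Fin d → ℕ) : Set (Fin d → Fin n → ZMod b) :=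
  {A | ∀ (i : Fin d) (k : Fin n),
    (lam i < (k : ℕ) + 1 → (k : ℕ) + 1 < γ i → A i k = 0) ∧
    (γ i < (k : ℕ) + 1 → A i k = 0)}


/-- The vanishing-condition predicate describing `𝒱_{γ,λ}`. -/
def Ppred {d n : ℕ} (γ lam : Fin d → ℕ) (i : Fin d) (k : Fin n) : Prop :=
  (k : ℕ) + 1 ≤ lam i ∨ (lam i < γ i ∧ (k : ℕ) + 1 = γ i)

instance {d n : ℕ} (γ lam : Fin d → ℕ) (i : Fin d) (k : Fin n) :
    Decidable (Ppred γ lam i k) := by unfold Ppred; infer_instance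

/-- The submodule of `Fin d → Fin n → ZMod b` cut out by vanishing conditions `P`. -/
def coordSub (b : ℕ) {d n : ℕ} (P : Fin d → Fin n → Prop) [∀ i k, Decidable (P i k)] :
    Submodule (ZMod b) (Fin d → Fin n → ZMod b) where
  carrier := {A | ∀ i k, P i k → A i k = 0}
  add_mem' := fun hx hy i k h => by simp [Pi.add_apply, hx i k h, hy i k h]
  zero_mem' := fun i k _ => rfl
  smul_mem' := fun c x hx i k h => by simp [Pi.smul_apply, hx i k h]

lemma mem_coordSub {b d n : ℕ} {P : Fin d → Fin n → Prop} [∀ i k, Decidable (P i k)]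
    {A : Fin d → Fin n → ZMod b} :
    A ∈ coordSub b P ↔ ∀ i k, P i k → A i k = 0 := Iff.rfl

/-- `coordSub` is equivalent to functions on the complement index set. -/
def coordSubEquiv (b : ℕ) {d n : ℕ} (P : Fin d → Fin n → Prop) [∀ i k, Decidable (P i k)] :
    coordSub b P ≃ ({p : Fin d × Fin n // ¬ P p.1 p.2} → ZMod b) where
  toFun A j := A.1 j.1.1 j.1.2
  invFun f := ⟨fun i k => if h : P i k then 0 else f ⟨(i, k), h⟩, fun i k h => by simp [h]⟩
  left_inv A := by
    apply Subtype.ext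
    funext i k
    by_cases h : P i k
    · simp [h, (A.2 i k h).symm]
    · simp [h]
  right_inv f := by
    funext j
    obtain ⟨⟨i, k⟩, hj⟩ := j
    simp [hj]

lemma card_coordSub {b d n : ℕ} (hb : b.Prime) (P : Fin d → Fin n → Prop)
    [∀ i k, Decidable (P i k)] :
    Nat.card (coordSub b P) = b ^ (Fintype.card {p : Fin d × Fin n // ¬ P p.1 p.2}) := by
  haveI : NeZero b := ⟨hb.pos.ne'⟩
  rw [Nat.card_congr (coordSubEquiv b P)]
  simp [Nat.card_eq_fintype_card, Fintype.card_fun, ZMod.card]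

/-- The dot-product pairing as a linear map into the dual. -/
def dotMap (b d n : ℕ) :
    (Fin d → Fin n → ZMod b) →ₗ[ZMod b]
      Module.Dual (ZMod b) (Fin d → Fin n → ZMod b) :=
  LinearMap.mk₂ (ZMod b) (fun B A => ∑ i, ∑ k, B i k * A i k)
    (fun B B' A => by simp [add_mul, Finset.sum_add_distrib])
    (fun c B A => by simp [Finset.mul_sum, mul_assoc])
    (fun B A A' => by simp [mul_add, Finset.sum_add_distrib])
    (fun c B A => by simp [Finset.mul_sum, mul_left_comm])

lemma dotMap_apply {b d n : ℕ} (B A : Fin d → Fin n → ZMod b) :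
    dotMap b d n B A = ∑ i, ∑ k, B i k * A i k := rfl

lemma sum_mul_indicator {b d n : ℕ} (A : Fin d → Fin n → ZMod b) (i : Fin d) (k : Fin n) :
    ∑ i', ∑ k', A i' k' * (if i' = i ∧ k' = k then (1 : ZMod b) else 0) = A i k := by
  rw [Finset.sum_eq_single i]
  · rw [Finset.sum_eq_single k]
    · simp
    · intro k' _ hk'; simp [hk']
    · simp
  · intro i' _ hi'; simp [hi']
  · simp

lemma dotMap_bijective {b d n : ℕ} (hb : b.Prime) : Function.Bijective (dotMap b d n) := by
  haveI : NeZero b := ⟨hb.pos.ne'⟩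
  haveI := Fact.mk hb
  have hinj : Function.Injective (dotMap b d n) := by
    rw [← LinearMap.ker_eq_bot, LinearMap.ker_eq_bot']
    intro B hB
    funext i k
    have h0 : dotMap b d n B (fun i' k' => if i' = i ∧ k' = k then 1 else 0) = 0 := by
      rw [hB]; rfl
    rw [dotMap_apply, sum_mul_indicator] at h0
    simpa using h0
  refine ⟨hinj, ?_⟩
  rw [← LinearMap.range_eq_top]
  apply Submodule.eq_top_of_finrank_eq
  rw [LinearMap.finrank_range_of_inj hinj, Subspace.dual_finrank_eq]

/-- The dual (w.r.t. the dot product) of a coordinate subspace is the complementary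
coordinate subspace. -/
lemma comap_dualAnnihilator_coordSub {b d n : ℕ} (P : Fin d → Fin n → Prop)
    [∀ i k, Decidable (P i k)] :
    Submodule.comap (dotMap b d n) (Submodule.dualAnnihilator (coordSub b P))
      = coordSub b (fun i k => ¬ P i k) := by
  ext A
  rw [Submodule.mem_comap, Submodule.mem_dualAnnihilator]
  constructor
  · intro h i k hnp
    have := h (fun i' k' => if i' = i ∧ k' = k then 1 else 0)
      (fun i' k' hp => by
        by_cases hik : i' = i ∧ k' = k
        · exact absurd (hik.1 ▸ hik.2 ▸ hp) hnp
        · simp [hik])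
    rwa [dotMap_apply, sum_mul_indicator] at this
  · intro h B hB
    rw [dotMap_apply]
    refine Finset.sum_eq_zero fun i _ => Finset.sum_eq_zero fun k _ => ?_
    by_cases hp : P i k
    · rw [hB i k hp, mul_zero]
    · rw [h i k hp, zero_mul]

/-- Counting lemma: the number of constrained positions is `|λ| + σ`. -/
lemma card_constrained {d n : ℕ} (γ lam : Fin d → ℕ) (hlg : ∀ i, lam i ≤ γ i)
    (hgn : ∀ i, γ i ≤ n) :
    Fintype.card {p : Fin d × Fin n // Ppred γ lam p.1 p.2}
      = (∑ i, lam i) + (Finset.univ.filter fun i => lam i < γ i).card := by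
  rw [Fintype.card_congr (Equiv.subtypeProdEquivSigmaSubtype (Ppred γ lam))]
  rw [Fintype.card_sigma]
  have hper : ∀ i : Fin d,
      Fintype.card {k : Fin n // Ppred γ lam i k}
        = lam i + (if lam i < γ i then 1 else 0) := by
    intro i
    rw [Fintype.card_subtype]
    have hsplit : (univ.filter fun k : Fin n => Ppred γ lam i k)
        = (univ.filter fun k : Fin n => (k : ℕ) + 1 ≤ lam i)
          ∪ (univ.filter fun k : Fin n => lam i < γ i ∧ (k : ℕ) + 1 = γ i) := by
      rw [← Finset.filter_or]; rfl
    rw [hsplit, Finset.card_union_of_disjoint]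
    · congr 1
      · have himg : ((univ.filter fun k : Fin n => (k : ℕ) + 1 ≤ lam i).image Fin.val)
            = Finset.range (lam i) := by
          ext j
          simp only [Finset.mem_image, Finset.mem_filter, Finset.mem_univ, true_and,
            Finset.mem_range]
          constructor
          · rintro ⟨k, hk, rfl⟩; omega
          · intro hj
            exact ⟨⟨j, by have := hlg i; have := hgn i; omega⟩, by simpa using hj, rfl⟩
        have := Finset.card_image_of_injective
          (univ.filter fun k : Fin n => (k : ℕ) + 1 ≤ lam i) Fin.val_injective
        rw [himg, Finset.card_range] at this
        omega
      · by_cases hc : lam i < γ i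
        · rw [if_pos hc, Finset.card_eq_one]
          refine ⟨⟨γ i - 1, by have := hgn i; omega⟩, ?_⟩
          ext k
          simp only [Finset.mem_filter, Finset.mem_univ, true_and, Finset.mem_singleton,
            Fin.ext_iff]
          constructor
          · rintro ⟨-, hk⟩; omega
          · intro hk; exact ⟨hc, by omega⟩
        · rw [if_neg hc, Finset.card_eq_zero, Finset.filter_eq_empty_iff]
          intro k _
          tauto
    · rw [Finset.disjoint_left]
      rintro k hk1 hk2
      simp only [Finset.mem_filter, Finset.mem_univ, true_and] at hk1 hk2
      omega
  rw [Finset.sum_congr rfl (fun i _ => hper i), Finset.sum_add_distrib]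
  congr 1
  rw [Finset.card_filter]

/-- `#(𝒞 ∩ 𝒱_{γ,λ}) = (#𝒞 / b^{|λ|+σ}) · #(𝒞^⊥ ∩ 𝒱_{γ,λ}^⊥)`, where
`|λ| = λ_1 + … + λ_d` and `σ = #{i : λ_i < γ_i}`. -/
theorem statement14 (b d n : ℕ) (hb : b.Prime) (hd : 1 ≤ d) (hn : 1 ≤ n)
    (𝒞 : Submodule (ZMod b) (Fin d → Fin n → ZMod b))
    (γ lam : Fin d → ℕ) (hlg : ∀ i, lam i ≤ γ i) (hgn : ∀ i, γ i ≤ n) :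
    (Nat.card ↥((𝒞 : Set (Fin d → Fin n → ZMod b)) ∩ Vgl b d n γ lam) : ℝ)
      = (Nat.card 𝒞 : ℝ) /
          (b : ℝ) ^ ((∑ i, lam i) + (Finset.univ.filter fun i => lam i < γ i).card) *
        (Nat.card ↥(dualCode (𝒞 : Set (Fin d → Fin n → ZMod b)) ∩ VglPerp b d n γ lam) : ℝ) := by
  haveI := Fact.mk hb
  haveI : NeZero b := ⟨hb.pos.ne'⟩
  set s : ℕ := (∑ i, lam i) + (Finset.univ.filter fun i => lam i < γ i).card with hs
  set V : Submodule (ZMod b) (Fin d → Fin n → ZMod b) := coordSub b (Ppred γ lam) with hV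
  set Cp : Submodule (ZMod b) (Fin d → Fin n → ZMod b) :=
    Submodule.comap (dotMap b d n) 𝒞.dualAnnihilator with hCp
  set Vp : Submodule (ZMod b) (Fin d → Fin n → ZMod b) :=
    Submodule.comap (dotMap b d n) V.dualAnnihilator with hVp
  -- the ambient dimension
  have hE : finrank (ZMod b) (Fin d → Fin n → ZMod b) = d * n := by
    rw [Module.finrank_pi_fintype]
    simp [Module.finrank_fintype_fun_eq_card, Finset.sum_const, mul_comm]
  -- cardinality of a submodule
  have hcard : ∀ W : Submodule (ZMod b) (Fin d → Fin n → ZMod b),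
      Nat.card W = b ^ finrank (ZMod b) W := by
    intro W
    haveI : Fintype W := Fintype.ofFinite W
    rw [Nat.card_eq_fintype_card, card_eq_pow_finrank (K := ZMod b), ZMod.card]
  -- finrank is preserved by comap along the (bijective) dot-product map
  have hcomap : ∀ W : Submodule (ZMod b)
      (Module.Dual (ZMod b) (Fin d → Fin n → ZMod b)),
      finrank (ZMod b) (Submodule.comap (dotMap b d n) W) = finrank (ZMod b) W := by
    intro W
    have h1 := LinearEquiv.finrank_map_eq
      (LinearEquiv.ofBijective (dotMap b d n) (dotMap_bijective hb))
      (Submodule.comap (dotMap b d n) W)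
    rw [show ((LinearEquiv.ofBijective (dotMap b d n) (dotMap_bijective hb) :
        (Fin d → Fin n → ZMod b) →ₗ[ZMod b] _)) = dotMap b d n from rfl,
      Submodule.map_comap_eq_of_surjective (dotMap_bijective hb).2 W] at h1
    exact h1.symm
  -- finrank of dual annihilators
  have hdann : ∀ W : Submodule (ZMod b) (Fin d → Fin n → ZMod b),
      finrank (ZMod b) W.dualAnnihilator + finrank (ZMod b) W = d * n := by
    intro W
    have h1 : finrank (ZMod b) ((Fin d → Fin n → ZMod b) ⧸ W)
        = finrank (ZMod b) W.dualAnnihilator :=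
      (Subspace.quotEquivAnnihilator W).finrank_eq
    rw [← h1, Submodule.finrank_quotient_add_finrank, hE]
  -- the number of constrained positions
  have hcardP : Fintype.card {p : Fin d × Fin n // Ppred γ lam p.1 p.2} = s :=
    card_constrained γ lam hlg hgn
  have hsle : s ≤ d * n := by
    have h := Fintype.card_subtype_le (fun p : Fin d × Fin n => Ppred γ lam p.1 p.2)
    rwa [hcardP, Fintype.card_prod, Fintype.card_fin, Fintype.card_fin] at h
  -- finrank of V
  have hfV : finrank (ZMod b) V = d * n - s := by
    have h1 : Nat.card V = b ^ (d * n - s) := by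
      rw [hV, card_coordSub hb]
      congr 1
      rw [Fintype.card_subtype_compl, hcardP, Fintype.card_prod, Fintype.card_fin,
        Fintype.card_fin]
    rw [hcard V] at h1
    exact Nat.pow_right_injective hb.two_le h1
  -- finrank of Vp
  have hfVp : finrank (ZMod b) Vp = s := by
    have h := hdann V
    have h2 : finrank (ZMod b) Vp = finrank (ZMod b) V.dualAnnihilator := hcomap _
    omega
  -- dimension bookkeeping
  have hsup := Submodule.finrank_sup_add_finrank_inf_eq 𝒞 V
  have hCpVp : Cp ⊓ Vp = Submodule.comap (dotMap b d n) (𝒞 ⊔ V).dualAnnihilator := by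
    rw [Submodule.dualAnnihilator_sup_eq, Submodule.comap_inf]
  have hz : finrank (ZMod b) ↥(Cp ⊓ Vp) + finrank (ZMod b) ↥(𝒞 ⊔ V) = d * n := by
    rw [hCpVp, hcomap]
    exact hdann _
  have key : finrank (ZMod b) ↥(𝒞 ⊓ V) + s
      = finrank (ZMod b) 𝒞 + finrank (ZMod b) ↥(Cp ⊓ Vp) := by omega
  -- identify the sets
  have hVglSet : Vgl b d n γ lam = (V : Set (Fin d → Fin n → ZMod b)) := by
    ext A
    constructor
    · intro hA i k hp
      rcases hp with h1 | ⟨h2a, h2b⟩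
      · exact (hA i k).1 h1
      · exact (hA i k).2 h2a h2b
    · intro hA i k
      exact ⟨fun h1 => hA i k (Or.inl h1), fun h2a h2b => hA i k (Or.inr ⟨h2a, h2b⟩)⟩
  have hset1 : ((𝒞 : Set (Fin d → Fin n → ZMod b)) ∩ Vgl b d n γ lam)
      = ((𝒞 ⊓ V : Submodule (ZMod b) _) : Set (Fin d → Fin n → ZMod b)) := by
    rw [hVglSet, ← Submodule.coe_inf]
  have hdualSet : dualCode (𝒞 : Set (Fin d → Fin n → ZMod b))
      = (Cp : Set (Fin d → Fin n → ZMod b)) := by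
    ext A
    simp only [dualCode, Set.mem_setOf_eq, SetLike.mem_coe, hCp, Submodule.mem_comap,
      Submodule.mem_dualAnnihilator]
    constructor
    · intro h B hB
      have := h B hB
      rw [dotMap_apply]
      simpa [mul_comm] using this
    · intro h B hB
      have := h B hB
      rw [dotMap_apply] at this
      simpa [mul_comm] using this
  have hperpSet : VglPerp b d n γ lam = (Vp : Set (Fin d → Fin n → ZMod b)) := by
    rw [hVp, hV, comap_dualAnnihilator_coordSub]
    ext A
    constructor
    · intro hA i k hnp
      unfold Ppred at hnp
      have h1 := (hA i k).1
      have h2 := (hA i k).2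
      have hkn := k.isLt
      rcases Nat.lt_trichotomy ((k : ℕ) + 1) (γ i) with hlt | heq | hgt
      · exact h1 (by omega) hlt
      · exfalso; omega
      · exact h2 hgt
    · intro hA i k
      have hlgi := hlg i
      constructor
      · intro ha hb'
        exact hA i k (by unfold Ppred; omega)
      · intro ha
        exact hA i k (by unfold Ppred; omega)
  have hset2 : (dualCode (𝒞 : Set (Fin d → Fin n → ZMod b)) ∩ VglPerp b d n γ lam)
      = ((Cp ⊓ Vp : Submodule (ZMod b) _) : Set (Fin d → Fin n → ZMod b)) := by
    rw [hdualSet, hperpSet, ← Submodule.coe_inf]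
  -- final computation
  rw [hset1, hset2, SetLike.coe_sort_coe, SetLike.coe_sort_coe, hcard, hcard, hcard]
  have hb0 : ((b : ℝ)) ≠ 0 := Nat.cast_ne_zero.mpr hb.pos.ne'
  rw [div_mul_eq_mul_div, eq_div_iff (pow_ne_zero _ hb0)]
  push_cast
  rw [← pow_add, ← pow_add]
  exact congrArg (fun t => (b : ℝ) ^ t) key
end

section
/- Let b be a prime and d, n positive integers. Let 𝒞 be an 𝔽_b-linear subspace of 𝔽_b^{dn} of dimension n whose dual space 𝒞^⊥ (of dimension dn − n) satisfies δ_n(𝒞^⊥) ≥ n + 1. Let 0 ≤ λ_i ≤ γ_i ≤ n be integers for 1 ≤ i ≤ d with γ_1 + … + γ_d ≥ n + 1 and λ_1 + … + λ_d + d ≤ n. Then: #{ A = (a_1,…,a_d) ∈ 𝒞^⊥ : v_n(a_i) ≤ γ_i for all i, and a_{ik} = 0 for all i and all k with λ_i < k < γ_i } ≤ b^d. -/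
/-- `v_n(a)`: `0` if `a = 0`, otherwise the largest (1-based) index `ν` with `a_ν ≠ 0`. -/
def vnWeight {b n : ℕ} (a : Fin n → ZMod b) : ℕ :=
  (Finset.univ.filter fun ν : Fin n => a ν ≠ 0).sup (fun ν => (ν : ℕ) + 1)

lemma vnWeight_le_iff {b n m : ℕ} (a : Fin n → ZMod b) :
    vnWeight a ≤ m ↔ ∀ ν : Fin n, a ν ≠ 0 → (ν : ℕ) + 1 ≤ m := by
  simp [vnWeight, Finset.sup_le_iff]

/-- if `𝒞 ⊆ 𝔽_b^{dn}` has dimension `n` and `δ_n(𝒞^⊥) ≥ n + 1`, and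
`0 ≤ λ_i ≤ γ_i ≤ n` with `γ_1 + … + γ_d ≥ n + 1` and `λ_1 + … + λ_d + d ≤ n`, then the
number of `A ∈ 𝒞^⊥` with `v_n(a_i) ≤ γ_i` for all `i` and `a_{ik} = 0` for all
`λ_i < k < γ_i` (1-based indices) is at most `b^d`. -/
theorem statement15 (b d n : ℕ) (hb : b.Prime) (hd : 1 ≤ d) (hn : 1 ≤ n)
    (𝒞 : Submodule (ZMod b) (Fin d → Fin n → ZMod b))
    (hdim : Module.finrank (ZMod b) 𝒞 = n)
    (hδ : ∀ A ∈ dualCode (𝒞 : Set (Fin d → Fin n → ZMod b)), A ≠ 0 →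
      n + 1 ≤ ∑ i, vnWeight (A i))
    (γ lam : Fin d → ℕ) (hlg : ∀ i, lam i ≤ γ i) (hgn : ∀ i, γ i ≤ n)
    (hγ : n + 1 ≤ ∑ i, γ i) (hlam : (∑ i, lam i) + d ≤ n) :
    Nat.card {A : Fin d → Fin n → ZMod b //
        A ∈ dualCode (𝒞 : Set (Fin d → Fin n → ZMod b)) ∧
        (∀ i, vnWeight (A i) ≤ γ i) ∧
        ∀ (i : Fin d) (k : Fin n), lam i < (k : ℕ) + 1 → (k : ℕ) + 1 < γ i → A i k = 0}
      ≤ b ^ d := by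
  haveI : NeZero b := ⟨hb.ne_zero⟩
  set S := {A : Fin d → Fin n → ZMod b //
        A ∈ dualCode (𝒞 : Set (Fin d → Fin n → ZMod b)) ∧
        (∀ i, vnWeight (A i) ≤ γ i) ∧
        ∀ (i : Fin d) (k : Fin n), lam i < (k : ℕ) + 1 → (k : ℕ) + 1 < γ i → A i k = 0}
  let φ : S → (Fin d → ZMod b) := fun A i =>
    if h : 1 ≤ γ i then A.1 i ⟨γ i - 1, by have := hgn i; omega⟩ else 0
  have hinj : Function.Injective φ := by
    intro A A' hAA'
    have hD : (A.1 - A'.1) ∈ dualCode (𝒞 : Set (Fin d → Fin n → ZMod b)) := by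
      intro B hB
      have h1 := A.2.1 B hB
      have h2 := A'.2.1 B hB
      simp only [Pi.sub_apply, mul_sub, Finset.sum_sub_distrib, h1, h2, sub_zero]
    have hw : ∀ i, vnWeight ((A.1 - A'.1) i) ≤ lam i := by
      intro i
      rw [vnWeight_le_iff]
      intro ν hν
      by_contra hlt
      push_neg at hlt
      apply hν
      show A.1 i ν - A'.1 i ν = 0
      rcases lt_trichotomy ((ν : ℕ) + 1) (γ i) with h | h | h
      · rw [A.2.2.2 i ν (by omega) h, A'.2.2.2 i ν (by omega) h, sub_self]
      · have hg1 : 1 ≤ γ i := by omega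
        have heq := congrFun hAA' i
        simp only [φ, dif_pos hg1] at heq
        have hν' : ν = (⟨γ i - 1, by have := hgn i; omega⟩ : Fin n) := Fin.ext (by simp; omega)
        rw [hν', heq, sub_self]
      · have h1 : A.1 i ν = 0 := by
          by_contra h'
          exact absurd ((vnWeight_le_iff _).1 (A.2.2.1 i) ν h') (by omega)
        have h2 : A'.1 i ν = 0 := by
          by_contra h'
          exact absurd ((vnWeight_le_iff _).1 (A'.2.2.1 i) ν h') (by omega)
        rw [h1, h2, sub_self]
    have hD0 : A.1 - A'.1 = 0 := by
      by_contra hne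
      have h1 := hδ _ hD hne
      have h2 : ∑ i, vnWeight ((A.1 - A'.1) i) ≤ ∑ i, lam i :=
        Finset.sum_le_sum fun i _ => hw i
      omega
    exact Subtype.ext (sub_eq_zero.mp hD0)
  calc Nat.card S ≤ Nat.card (Fin d → ZMod b) := Nat.card_le_card_of_injective φ hinj
    _ = b ^ d := by simp [Nat.card_eq_fintype_card, ZMod.card]
end
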